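/- arXiv:1803.08560 — 2 statements merged into one kernel-verified Lean document; each statement's English description precedes it below -/
import Mathlib

section
/- For smooth, rapidly decaying f, g : ℝ → ℂ, the commutator [f, H]g of multiplication by f with the Hilbert transform H satisfies ‖[f,H]g‖_{L∞} ≤ C ‖f'‖_{L²} ‖g‖_{L²} for a universal constant C. -/
open MeasureTheory Filter
open scoped ENNReal

/-- The Hilbert transform on `ℝ`, `Hf(x) = (1/(πi)) p.v. ∫ f(y)/(x-y) dy`, defined as the
limit of the truncated singular integrals as the truncation parameter `ε → 0⁺`. -/
noncomputable def hilbertT (f : ℝ → ℂ) (x : ℝ) : ℂ :=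
  limUnder (nhdsWithin 0 (Set.Ioi (0 : ℝ))) (fun ε : ℝ =>
    ((Real.pi : ℂ) * Complex.I)⁻¹ * ∫ y in {y : ℝ | ε < |x - y|}, f y / ((x : ℂ) - (y : ℂ)))

/-- The commutator `[f, H]g = f · Hg − H(fg)` of multiplication by `f` with the Hilbert
transform. -/
noncomputable def commHilbert (f g : ℝ → ℂ) : ℝ → ℂ :=
  fun x => f x * hilbertT g x - hilbertT (fun y => f y * g y) x

noncomputable def nearK (h : ℝ → ℂ) (x y : ℝ) : ℂ := (h y - h x) / ((x : ℂ) - (y : ℂ))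

noncomputable def Lpv (h : ℝ → ℂ) (x : ℝ) : ℂ :=
  (∫ y in Metric.ball x 1, nearK h x y) + ∫ y in {y : ℝ | 1 ≤ |x - y|}, h y / ((x : ℂ) - (y : ℂ))

lemma ms_ab (x a b : ℝ) : MeasurableSet {y : ℝ | a < |x - y| ∧ |x - y| < b} :=
  MeasurableSet.inter
    (measurableSet_lt measurable_const (measurable_const.sub measurable_id).abs)
    (measurableSet_lt (measurable_const.sub measurable_id).abs measurable_const)

-- oddness
lemma odd_int_zero (x a b : ℝ) :
    ∫ y in {y : ℝ | a < |x - y| ∧ |x - y| < b}, ((x : ℂ) - (y : ℂ))⁻¹ = 0 := by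
  set G : ℝ → ℂ := fun t => Set.indicator {t : ℝ | a < |t| ∧ |t| < b} (fun t => ((t : ℝ) : ℂ)⁻¹) t with hG
  have h1 : ∫ y in {y : ℝ | a < |x - y| ∧ |x - y| < b}, ((x : ℂ) - (y : ℂ))⁻¹ = ∫ y, G (x - y) := by
    rw [← integral_indicator (ms_ab x a b)]
    congr 1
    ext y
    have hc : ((x : ℂ) - (y : ℂ)) = ((x - y : ℝ) : ℂ) := by push_cast; ring
    simp only [hG, Set.indicator, Set.mem_setOf_eq, hc]
  have h2 : ∫ y, G (x - y) = ∫ t, G t := integral_sub_left_eq_self G volume x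
  have h3 : ∫ t, G t = 0 := by
    have hodd : ∀ t, G (-t) = -G t := by
      intro t
      simp only [hG, Set.indicator, Set.mem_setOf_eq, abs_neg]
      by_cases h : a < |t| ∧ |t| < b
      all_goals simp [h, inv_neg]
    have hneg := integral_neg_eq_self G volume
    simp_rw [hodd, integral_neg] at hneg
    have : (2 : ℂ) * ∫ t, G t = 0 := by rw [two_mul]; linear_combination -hneg
    simpa using this
  rw [h1, h2, h3]

section Conv
variable {h : ℝ → ℂ} {x : ℝ}

lemma phi_aesm (hc : Continuous h) (x : ℝ) :
    AEStronglyMeasurable (fun y : ℝ => h y / ((x : ℂ) - (y : ℂ))) volume := by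
  have : Measurable (fun y : ℝ => ((x : ℂ) - (y : ℂ))⁻¹) :=
    ((continuous_const.sub (Complex.continuous_ofReal)).measurable).inv
  simp_rw [div_eq_mul_inv]
  exact (hc.measurable.mul this).aestronglyMeasurable

lemma nearK_aesm (hc : Continuous h) (x : ℝ) :
    AEStronglyMeasurable (nearK h x) volume := by
  have : Measurable (fun y : ℝ => ((x : ℂ) - (y : ℂ))⁻¹) :=
    ((continuous_const.sub (Complex.continuous_ofReal)).measurable).inv
  unfold nearK
  simp_rw [div_eq_mul_inv]
  exact ((hc.measurable.sub measurable_const).mul this).aestronglyMeasurable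

lemma norm_ofReal_sub (x y : ℝ) : ‖(x : ℂ) - (y : ℂ)‖ = |x - y| := by
  have : ((x : ℂ) - (y : ℂ)) = ((x - y : ℝ) : ℂ) := by push_cast; ring
  rw [this, Complex.norm_real, Real.norm_eq_abs]

lemma nearK_bound (M : ℝ) (hM0 : 0 ≤ M) (hM : ∀ y z, ‖h y - h z‖ ≤ M * |y - z|) (x y : ℝ) :
    ‖nearK h x y‖ ≤ M := by
  rcases eq_or_ne y x with rfl | hyx
  · simp [nearK, hM0]
  · have hne : |x - y| ≠ 0 := by
      simp only [abs_ne_zero, sub_ne_zero]; exact fun e => hyx e.symm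
    rw [nearK, norm_div, norm_ofReal_sub]
    rw [div_le_iff₀ (lt_of_le_of_ne (abs_nonneg _) (Ne.symm hne))]
    calc ‖h y - h x‖ ≤ M * |y - x| := hM y x
    _ = M * |x - y| := by rw [abs_sub_comm]

lemma nearK_integrableOn (hc : Continuous h) (M : ℝ) (hM0 : 0 ≤ M)
    (hM : ∀ y z, ‖h y - h z‖ ≤ M * |y - z|) (x : ℝ) {s : Set ℝ}
    (hs : s ⊆ Metric.ball x 1) : IntegrableOn (nearK h x) s volume := by
  apply Measure.integrableOn_of_bounded (M := M)
  · exact ne_of_lt (lt_of_le_of_lt (measure_mono hs) (by simp [Real.volume_ball]))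
  · exact nearK_aesm hc x
  · exact Filter.Eventually.of_forall fun y => nearK_bound M hM0 hM x y

lemma far_integrableOn (hc : Continuous h) (hi : Integrable h) (x : ℝ) :
    IntegrableOn (fun y : ℝ => h y / ((x : ℂ) - (y : ℂ))) {y : ℝ | 1 ≤ |x - y|} volume := by
  apply Integrable.mono (hi.restrict) ((phi_aesm hc x).restrict)
  have hms : MeasurableSet {y : ℝ | 1 ≤ |x - y|} :=
    measurableSet_le measurable_const (measurable_const.sub measurable_id).abs
  rw [ae_restrict_iff' hms]
  apply Filter.Eventually.of_forall
  intro y hy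
  rw [norm_div, norm_ofReal_sub]
  exact div_le_self (norm_nonneg _) hy
end Conv

lemma tendsto_trunc (hc : Continuous h) (hi : Integrable h) {M : ℝ} (hM0 : 0 ≤ M)
    (hM : ∀ y z, ‖h y - h z‖ ≤ M * |y - z|) (x : ℝ) :
    Tendsto (fun ε : ℝ => ∫ y in {y : ℝ | ε < |x - y|}, h y / ((x : ℂ) - (y : ℂ)))
      (nhdsWithin 0 (Set.Ioi 0)) (nhds (Lpv h x)) := by
  rw [← tendsto_sub_nhds_zero_iff]
  apply squeeze_zero_norm' (a := fun ε => M * (2 * ε))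
  · filter_upwards [Ioo_mem_nhdsGT_of_mem (Set.mem_Ico.mpr ⟨le_refl 0, one_pos⟩)] with ε hε
    obtain ⟨hε0, hε1⟩ := hε
    set φ : ℝ → ℂ := fun y => h y / ((x : ℂ) - (y : ℂ)) with hφ
    set S := {y : ℝ | ε < |x - y|}
    set A := S ∩ Metric.ball x 1 with hA
    set Dset := Metric.ball x 1 \ S with hD
    have hSmeas : MeasurableSet S :=
      measurableSet_lt measurable_const (measurable_const.sub measurable_id).abs
    have hAb : A ⊆ Metric.ball x 1 := Set.inter_subset_right
    have hball : ∀ y : ℝ, y ∈ Metric.ball x 1 ↔ |x - y| < 1 := by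
      intro y; rw [Metric.mem_ball, Real.dist_eq, abs_sub_comm]
    -- A = {ε < |x-y| ∧ |x-y| < 1}
    have hAeq : A = {y : ℝ | ε < |x - y| ∧ |x - y| < 1} := by
      ext y; simp only [hA, Set.mem_inter_iff, Set.mem_setOf_eq, hball y, S]
    -- split S
    have hSsplit : S = A ∪ {y : ℝ | 1 ≤ |x - y|} := by
      ext y
      simp only [hA, Set.mem_union, Set.mem_inter_iff, Set.mem_setOf_eq, hball y, S]
      constructor
      · intro hy
        rcases lt_or_ge (|x - y|) 1 with hlt | hge
        · exact Or.inl ⟨hy, hlt⟩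
        · exact Or.inr hge
      · rintro (⟨hy, _⟩ | hy)
        · exact hy
        · exact lt_of_lt_of_le hε1 hy
    have hdisj : Disjoint A {y : ℝ | 1 ≤ |x - y|} := by
      rw [Set.disjoint_left]
      rintro y ⟨-, hy2⟩ hy3
      exact absurd ((hball y).mp hy2) (not_lt.mpr hy3)
    -- φ = nearK + h x * inv on A pointwise
    have hms1 : MeasurableSet {y : ℝ | 1 ≤ |x - y|} :=
      measurableSet_le measurable_const (measurable_const.sub measurable_id).abs
    have hinv_meas : Measurable (fun y : ℝ => ((x : ℂ) - (y : ℂ))⁻¹) :=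
      ((continuous_const.sub (Complex.continuous_ofReal)).measurable).inv
    have hinvIntA : IntegrableOn (fun y : ℝ => ((x : ℂ) - (y : ℂ))⁻¹) A volume := by
      apply Measure.integrableOn_of_bounded (M := ε⁻¹)
      · exact ne_of_lt (lt_of_le_of_lt (measure_mono hAb) (by simp [Real.volume_ball]))
      · exact hinv_meas.aestronglyMeasurable
      · rw [ae_restrict_iff' (hSmeas.inter measurableSet_ball)]
        apply Filter.Eventually.of_forall
        rintro y ⟨hy1, -⟩
        rw [norm_inv, norm_ofReal_sub]
        exact inv_anti₀ hε0 (le_of_lt hy1)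
    have hnearIntA : IntegrableOn (nearK h x) A volume := nearK_integrableOn hc M hM0 hM x hAb
    have hfarInt : IntegrableOn φ {y : ℝ | 1 ≤ |x - y|} volume := far_integrableOn hc hi x
    have hfun : ∀ y ∈ A, φ y = nearK h x y + h x * ((x : ℂ) - (y : ℂ))⁻¹ := by
      intro y hy
      have hy1 : ε < |x - y| := hy.1
      have hne : ((x : ℂ) - (y : ℂ)) ≠ 0 := by
        intro hcontra
        have : |x - y| = 0 := by rw [← norm_ofReal_sub, hcontra, norm_zero]
        rw [this] at hy1; linarith
      rw [hφ]
      field_simp [nearK]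
      rw [nearK, mul_div_assoc', mul_div_cancel_left₀ _ hne]; ring
    have hφIntA : IntegrableOn φ A volume := by
      apply IntegrableOn.congr_fun _ (fun y hy => (hfun y hy).symm) (hSmeas.inter measurableSet_ball)
      exact hnearIntA.add (hinvIntA.const_mul (h x))
    have hAint : ∫ y in A, φ y = (∫ y in A, nearK h x y) := by
      rw [setIntegral_congr_fun (hSmeas.inter measurableSet_ball) hfun]
      rw [integral_add hnearIntA (hinvIntA.const_mul (h x)), integral_const_mul]
      rw [hAeq, odd_int_zero x ε 1, mul_zero, add_zero]
    -- near ball decomposition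
    have hDsub : Dset ⊆ Metric.closedBall x ε := by
      rintro y ⟨hy1, hy2⟩
      simp only [S, Set.mem_setOf_eq, not_lt] at hy2
      rw [Metric.mem_closedBall, Real.dist_eq, abs_sub_comm]
      exact hy2
    have hDint : IntegrableOn (nearK h x) Dset volume :=
      nearK_integrableOn hc M hM0 hM x (Set.diff_subset)
    have hunion : A ∪ Dset = Metric.ball x 1 := by
      rw [hA, hD, Set.inter_comm, Set.inter_union_diff]
    have hdisj2 : Disjoint A Dset := by
      rw [Set.disjoint_left]
      rintro y ⟨hy1, -⟩ ⟨-, hy2⟩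
      exact hy2 hy1
    have hballint : ∫ y in Metric.ball x 1, nearK h x y
        = (∫ y in A, nearK h x y) + ∫ y in Dset, nearK h x y := by
      rw [← hunion, setIntegral_union hdisj2 (measurableSet_ball.diff hSmeas) hnearIntA hDint]
    -- total
    have hSint : ∫ y in S, φ y = (∫ y in A, nearK h x y) + ∫ y in {y : ℝ | 1 ≤ |x - y|}, φ y := by
      rw [hSsplit, setIntegral_union hdisj hms1 hφIntA hfarInt, hAint]
    have hLpv : Lpv h x = (∫ y in A, nearK h x y) + (∫ y in Dset, nearK h x y)
        + ∫ y in {y : ℝ | 1 ≤ |x - y|}, φ y := by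
      rw [Lpv, hballint]
    have hkey : (∫ y in S, φ y) - Lpv h x = -∫ y in Dset, nearK h x y := by
      rw [hSint, hLpv]; ring
    rw [hkey, norm_neg]
    calc ‖∫ y in Dset, nearK h x y‖ ≤ M * (volume Dset).toReal := by
          apply norm_setIntegral_le_of_norm_le_const
          · exact lt_of_le_of_lt (measure_mono hDsub) measure_closedBall_lt_top
          · exact fun y _ => nearK_bound M hM0 hM x y
      _ ≤ M * (2 * ε) := by
          apply mul_le_mul_of_nonneg_left _ hM0
          have hmono : volume Dset ≤ volume (Metric.closedBall x ε) := measure_mono hDsub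
          rw [Real.volume_closedBall] at hmono
          have h1 : (volume Dset).toReal ≤ (ENNReal.ofReal (2 * ε)).toReal :=
            ENNReal.toReal_mono ENNReal.ofReal_ne_top hmono
          have h2 : (ENNReal.ofReal (2 * ε)).toReal = 2 * ε :=
            ENNReal.toReal_ofReal (by linarith)
          linarith
  · have : Tendsto (fun ε : ℝ => M * (2 * ε)) (nhds 0) (nhds (M * (2 * 0))) :=
      (continuous_const.mul (continuous_const.mul continuous_id)).tendsto 0
    simpa using this.mono_left nhdsWithin_le_nhds

lemma ball_union_far (x : ℝ) : Metric.ball x 1 ∪ {y : ℝ | 1 ≤ |x - y|} = Set.univ := by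
  ext y
  simp only [Set.mem_union, Metric.mem_ball, Real.dist_eq, Set.mem_setOf_eq, Set.mem_univ,
    iff_true]
  rw [abs_sub_comm]
  exact lt_or_ge _ _ |>.imp id id


lemma comm_eq {f g : ℝ → ℂ} (hcf : Continuous f) (hcg : Continuous g)
    (hig : Integrable g) (hifg : Integrable (fun y => f y * g y))
    {Mf Bg Mg Mfg : ℝ}
    (hMf0 : 0 ≤ Mf) (hMf : ∀ y z, ‖f y - f z‖ ≤ Mf * |y - z|)
    (hBg : ∀ y, ‖g y‖ ≤ Bg)
    (hMg0 : 0 ≤ Mg) (hMg : ∀ y z, ‖g y - g z‖ ≤ Mg * |y - z|)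
    (hMfg0 : 0 ≤ Mfg) (hMfg : ∀ y z, ‖f y * g y - f z * g z‖ ≤ Mfg * |y - z|)
    (x : ℝ) :
    f x * Lpv g x - Lpv (fun y => f y * g y) x
      = ∫ y : ℝ, (f x - f y) * g y / ((x : ℂ) - (y : ℂ)) := by
  set k : ℝ → ℂ := fun y => (f x - f y) * g y / ((x : ℂ) - (y : ℂ)) with hk
  have hcfg : Continuous (fun y => f y * g y) := hcf.mul hcg
  have hms1 : MeasurableSet {y : ℝ | 1 ≤ |x - y|} :=
    measurableSet_le measurable_const (measurable_const.sub measurable_id).abs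
  -- integrability of all pieces
  have hng : IntegrableOn (nearK g x) (Metric.ball x 1) volume :=
    nearK_integrableOn hcg Mg hMg0 hMg x subset_rfl
  have hnfg : IntegrableOn (nearK (fun y => f y * g y) x) (Metric.ball x 1) volume :=
    nearK_integrableOn hcfg Mfg hMfg0 hMfg x subset_rfl
  have hfg' : IntegrableOn (fun y : ℝ => g y / ((x : ℂ) - (y : ℂ))) {y : ℝ | 1 ≤ |x - y|} volume :=
    far_integrableOn hcg hig x
  have hffg' : IntegrableOn (fun y : ℝ => (f y * g y) / ((x : ℂ) - (y : ℂ)))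
      {y : ℝ | 1 ≤ |x - y|} volume := far_integrableOn hcfg hifg x
  -- pointwise identities
  have hnear_all : ∀ y : ℝ, f x * nearK g x y - nearK (fun y => f y * g y) x y = k y := by
    intro y; simp only [nearK, hk, div_eq_mul_inv]; ring
  have hfar_all : ∀ y : ℝ, f x * (g y / ((x : ℂ) - (y : ℂ)))
      - (f y * g y) / ((x : ℂ) - (y : ℂ)) = k y := by
    intro y; simp only [hk, div_eq_mul_inv]; ring
  have hball_eq : ∫ y in Metric.ball x 1, k y
      = f x * (∫ y in Metric.ball x 1, nearK g x y)
        - ∫ y in Metric.ball x 1, nearK (fun y => f y * g y) x y := by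
    rw [← integral_const_mul, ← integral_sub (hng.const_mul (f x)) hnfg]
    exact setIntegral_congr_fun measurableSet_ball (fun y _ => (hnear_all y).symm)
  have hfar_eq : ∫ y in {y : ℝ | 1 ≤ |x - y|}, k y
      = f x * (∫ y in {y : ℝ | 1 ≤ |x - y|}, g y / ((x : ℂ) - (y : ℂ)))
        - ∫ y in {y : ℝ | 1 ≤ |x - y|}, (f y * g y) / ((x : ℂ) - (y : ℂ)) := by
    rw [← integral_const_mul, ← integral_sub (hfg'.const_mul (f x)) hffg']
    exact setIntegral_congr_fun hms1 (fun y _ => (hfar_all y).symm)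
  -- k integrable on each piece (from the identities)
  have hk_ball : IntegrableOn k (Metric.ball x 1) volume := by
    apply IntegrableOn.congr_fun _ (fun y _ => hnear_all y) measurableSet_ball
    exact (hng.const_mul (f x)).sub hnfg
  have hk_far : IntegrableOn k {y : ℝ | 1 ≤ |x - y|} volume := by
    apply IntegrableOn.congr_fun _ (fun y _ => hfar_all y) hms1
    exact (hfg'.const_mul (f x)).sub hffg'
  have hdisj : Disjoint (Metric.ball x 1) {y : ℝ | 1 ≤ |x - y|} := by
    rw [Set.disjoint_left]
    intro y hy1 hy2
    rw [Metric.mem_ball, Real.dist_eq, abs_sub_comm] at hy1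
    exact absurd hy1 (not_lt.mpr hy2)
  have hsplit : ∫ y : ℝ, k y
      = (∫ y in Metric.ball x 1, k y) + ∫ y in {y : ℝ | 1 ≤ |x - y|}, k y := by
    rw [← setIntegral_union hdisj hms1 hk_ball hk_far, ball_union_far, setIntegral_univ]
  rw [hsplit, hball_eq, hfar_eq, Lpv, Lpv]
  ring

lemma lintegral_rpow_Ioc :
    ∫⁻ u in Set.Ioc (0:ℝ) 1, ENNReal.ofReal (u ^ (-(1/2) : ℝ)) = ENNReal.ofReal 2 := by
  have hint : IntegrableOn (fun u : ℝ => u ^ (-(1/2) : ℝ)) (Set.Ioc 0 1) volume := by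
    have := intervalIntegral.intervalIntegrable_rpow' (a := 0) (b := 1) (r := -(1/2)) (by norm_num)
    rwa [intervalIntegrable_iff_integrableOn_Ioc_of_le zero_le_one] at this
  have hnn : 0 ≤ᶠ[ae (volume.restrict (Set.Ioc (0:ℝ) 1))] fun u : ℝ => u ^ (-(1/2) : ℝ) := by
    rw [Filter.EventuallyLE, ae_restrict_iff' measurableSet_Ioc]
    exact Filter.Eventually.of_forall fun u hu => Real.rpow_nonneg (le_of_lt hu.1) _
  rw [← MeasureTheory.ofReal_integral_eq_lintegral_ofReal hint hnn]
  congr 1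
  have h1 : ∫ u in Set.Ioc (0:ℝ) 1, u ^ (-(1/2) : ℝ) = ∫ u in (0:ℝ)..1, u ^ (-(1/2) : ℝ) := by
    rw [intervalIntegral.integral_of_le zero_le_one]
  rw [h1, integral_rpow (Or.inl (by norm_num))]
  rw [show (-(1/2:ℝ) + 1) = (1/2:ℝ) by norm_num, Real.zero_rpow (by norm_num), Real.one_rpow]
  norm_num

lemma lintegral_comp_affine (G : ℝ → ℝ≥0∞) (hG : Measurable G) {u : ℝ} (c : ℝ) (hu : 0 < u) :
    ∫⁻ y : ℝ, G (u * y + c) = (ENNReal.ofReal u)⁻¹ * ∫⁻ t, G t := by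
  have hm1 : Measurable (fun y : ℝ => u * y) := by fun_prop
  have hm2 : Measurable (fun z : ℝ => z + c) := by fun_prop
  have hm3 : Measurable (fun y : ℝ => u * y + c) := by fun_prop
  have hmap1 : Measure.map (fun y : ℝ => u * y) volume = ENNReal.ofReal |u⁻¹| • volume :=
    Real.map_volume_mul_left hu.ne'
  have hmap2 : Measure.map (fun z : ℝ => z + c) volume = volume :=
    map_add_right_eq_self volume c
  have hcomp : (fun y : ℝ => u * y + c) = (fun z : ℝ => z + c) ∘ (fun y : ℝ => u * y) := rfl
  have hmap : Measure.map (fun y : ℝ => u * y + c) volume = ENNReal.ofReal u⁻¹ • volume := by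
    rw [hcomp, ← Measure.map_map hm2 hm1, hmap1, Measure.map_smul, hmap2,
      abs_of_pos (inv_pos.mpr hu)]
  have hlm := lintegral_map (μ := volume) hG hm3
  rw [hmap] at hlm
  rw [← hlm, lintegral_smul_measure, ENNReal.ofReal_inv_of_pos hu, smul_eq_mul]

lemma ftc_rep {f : ℝ → ℂ} (hdf : Differentiable ℝ f) (hcdf : Continuous (deriv f)) (x y : ℝ) :
    f x - f y = ((x - y : ℝ)) • ∫ u in (0:ℝ)..1, deriv f (x + u * (y - x)) := by
  set γ' : ℝ → ℂ := fun u => (y - x) • deriv f (x + u * (y - x)) with hγ'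
  have hinner : ∀ u : ℝ, HasDerivAt (fun u : ℝ => x + u * (y - x)) (y - x) u := by
    intro u
    simpa using ((hasDerivAt_id u).mul_const (y - x)).const_add x
  have hcomp : ∀ u : ℝ, HasDerivAt (fun u : ℝ => f (x + u * (y - x))) (γ' u) u := by
    intro u
    exact HasDerivAt.scomp u ((hdf _).hasDerivAt) (hinner u)
  have hii : IntervalIntegrable γ' volume 0 1 := by
    apply Continuous.intervalIntegrable
    exact ((continuous_const : Continuous fun _ : ℝ => (y - x : ℝ)).smul (hcdf.comp (by continuity)))
  have h1 := intervalIntegral.integral_eq_sub_of_hasDerivAt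
    (fun u _ => hcomp u) hii
  have h2 : (fun u : ℝ => f (x + u * (y - x))) 1 = f y := by norm_num
  have h3 : (fun u : ℝ => f (x + u * (y - x))) 0 = f x := by norm_num
  simp only [one_mul, zero_mul, add_zero] at h1
  have h23 : x + (y - x) = y := by ring
  rw [h23] at h1
  have h4 : ∫ u in (0:ℝ)..1, γ' u
      = (y - x) • ∫ u in (0:ℝ)..1, deriv f (x + u * (y - x)) := by
    rw [hγ']
    exact intervalIntegral.integral_smul _ _
  rw [h4] at h1
  calc f x - f y = -(f y - f x) := by ring
    _ = -((y - x) • ∫ u in (0:ℝ)..1, deriv f (x + u * (y - x))) := by rw [h1]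
    _ = ((x - y : ℝ)) • ∫ u in (0:ℝ)..1, deriv f (x + u * (y - x)) := by
        rw [← neg_smul, neg_sub]

lemma lintegral_bound {f g : ℝ → ℂ} (hdf : Differentiable ℝ f) (hcdf : Continuous (deriv f))
    (hmg : AEMeasurable g volume) (x : ℝ) :
    ∫⁻ y : ℝ, (‖(f x - f y) * g y / ((x : ℂ) - (y : ℂ))‖₊ : ℝ≥0∞)
      ≤ 2 * eLpNorm (deriv f) 2 volume * eLpNorm g 2 volume := by
  classical
  set N : ℝ≥0∞ := ∫⁻ t : ℝ, (‖deriv f t‖₊ : ℝ≥0∞) ^ (2:ℝ) with hN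
  set J : ℝ → ℂ := fun y => ∫ u in Set.Ioc (0:ℝ) 1, deriv f (x + u * (y - x)) with hJ
  have hJeq : ∀ y : ℝ, (∫ u in (0:ℝ)..1, deriv f (x + u * (y - x))) = J y := by
    intro y
    rw [intervalIntegral.integral_of_le zero_le_one]
  -- measurability of J
  have hFcont : Continuous (fun p : ℝ × ℝ => deriv f (x + p.2 * (p.1 - x))) := by
    apply hcdf.comp
    continuity
  have hJsm : StronglyMeasurable J :=
    hFcont.stronglyMeasurable.integral_prod_right'
  -- pointwise identity off {x}
  have hke : ∀ᵐ y : ℝ ∂volume,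
      (‖(f x - f y) * g y / ((x : ℂ) - (y : ℂ))‖₊ : ℝ≥0∞) = ↑‖J y‖₊ * ↑‖g y‖₊ := by
    have hx : ∀ᵐ y : ℝ ∂volume, y ≠ x := by
      rw [ae_iff]
      have : {y : ℝ | ¬ y ≠ x} = {x} := by ext y; simp
      rw [this]
      exact measure_singleton x
    filter_upwards [hx] with y hy
    have hfd : f x - f y = ((x - y : ℝ) : ℂ) * J y := by
      rw [ftc_rep hdf hcdf x y, hJeq y, Complex.real_smul]
    have hden : ((x : ℂ) - (y : ℂ)) = ((x - y : ℝ) : ℂ) := by push_cast; ring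
    have hc0 : ((x - y : ℝ) : ℂ) ≠ 0 := by
      simp only [ne_eq, Complex.ofReal_eq_zero, sub_eq_zero]
      exact fun e => hy e.symm
    have : (f x - f y) * g y / ((x : ℂ) - (y : ℂ)) = J y * g y := by
      rw [hfd, hden, mul_assoc, mul_div_cancel_left₀ _ hc0]
    rw [this, nnnorm_mul, ENNReal.coe_mul]
  rw [lintegral_congr_ae hke]
  -- Hölder
  have hconj : Real.HolderConjugate 2 2 := Real.HolderConjugate.two_two
  have hJm : AEMeasurable (fun y : ℝ => (‖J y‖₊ : ℝ≥0∞)) volume :=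
    hJsm.measurable.enorm.aemeasurable
  have hgm : AEMeasurable (fun y : ℝ => (‖g y‖₊ : ℝ≥0∞)) volume := hmg.enorm
  have hhold := ENNReal.lintegral_mul_le_Lp_mul_Lq volume hconj hJm hgm
  simp only [Pi.mul_apply] at hhold
  refine le_trans hhold ?_
  have hsnd : (∫⁻ y : ℝ, (‖g y‖₊ : ℝ≥0∞) ^ (2:ℝ) ∂volume) ^ ((1:ℝ)/2)
      = eLpNorm g 2 volume := by
    rw [eLpNorm_eq_lintegral_rpow_enorm_toReal (two_ne_zero) (ENNReal.ofNat_ne_top)]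
    norm_num
    rfl
  rw [hsnd]
  apply mul_le_mul_left
  -- main estimate on J
  set T : ℝ → ℝ≥0∞ := fun y => ∫⁻ u in Set.Ioc (0:ℝ) 1,
    ENNReal.ofReal (u ^ ((1:ℝ)/2)) * (‖deriv f (x + u * (y - x))‖₊ : ℝ≥0∞) ^ (2:ℝ) with hT
  have claim1 : ∀ y : ℝ, (‖J y‖₊ : ℝ≥0∞) ≤ (ENNReal.ofReal 2) ^ ((1:ℝ)/2) * (T y) ^ ((1:ℝ)/2) := by
    intro y
    have h0 : (‖J y‖₊ : ℝ≥0∞) ≤ ∫⁻ u in Set.Ioc (0:ℝ) 1,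
        (‖deriv f (x + u * (y - x))‖₊ : ℝ≥0∞) :=
      enorm_integral_le_lintegral_enorm _
    set w1 : ℝ → ℝ≥0∞ := fun u => ENNReal.ofReal (u ^ (-(1/4) : ℝ)) with hw1
    set w2 : ℝ → ℝ≥0∞ := fun u => ENNReal.ofReal (u ^ ((1/4) : ℝ))
      * (‖deriv f (x + u * (y - x))‖₊ : ℝ≥0∞) with hw2
    have hsplit : ∫⁻ u in Set.Ioc (0:ℝ) 1, (‖deriv f (x + u * (y - x))‖₊ : ℝ≥0∞)
        = ∫⁻ u in Set.Ioc (0:ℝ) 1, w1 u * w2 u := by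
      apply setLIntegral_congr_fun measurableSet_Ioc
      intro u hu
      dsimp only
      rw [← mul_assoc, ← ENNReal.ofReal_mul (Real.rpow_nonneg (le_of_lt hu.1) _),
        ← Real.rpow_add hu.1]
      norm_num
    have hw1m : Measurable w1 :=
      ENNReal.measurable_ofReal.comp (measurable_id.pow_const _)
    have hw2m : Measurable w2 := by
      rw [hw2]
      apply Measurable.mul (f := fun u : ℝ => ENNReal.ofReal (u ^ ((1/4) : ℝ)))
        (g := fun u => (‖deriv f (x + u * (y - x))‖₊ : ℝ≥0∞))
      · exact ENNReal.measurable_ofReal.comp (measurable_id.pow_const _)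
      · exact (hcdf.comp (by fun_prop)).measurable.enorm
    have hhold2 := ENNReal.lintegral_mul_le_Lp_mul_Lq (volume.restrict (Set.Ioc (0:ℝ) 1))
      hconj hw1m.aemeasurable hw2m.aemeasurable
    simp only [Pi.mul_apply] at hhold2
    have hw1sq : ∫⁻ u in Set.Ioc (0:ℝ) 1, w1 u ^ (2:ℝ) = ENNReal.ofReal 2 := by
      rw [← lintegral_rpow_Ioc]
      apply setLIntegral_congr_fun measurableSet_Ioc
      intro u hu
      dsimp only
      rw [ENNReal.ofReal_rpow_of_nonneg (Real.rpow_nonneg (le_of_lt hu.1) _) (by norm_num),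
        ← Real.rpow_mul (le_of_lt hu.1)]
      norm_num
    have hw2sq : ∫⁻ u in Set.Ioc (0:ℝ) 1, w2 u ^ (2:ℝ) = T y := by
      rw [hT]
      apply setLIntegral_congr_fun measurableSet_Ioc
      intro u hu
      dsimp only
      rw [ENNReal.mul_rpow_of_nonneg _ _ (by norm_num : (0:ℝ) ≤ 2),
        ENNReal.ofReal_rpow_of_nonneg (Real.rpow_nonneg (le_of_lt hu.1) _) (by norm_num),
        ← Real.rpow_mul (le_of_lt hu.1)]
      norm_num
    calc (‖J y‖₊ : ℝ≥0∞) ≤ ∫⁻ u in Set.Ioc (0:ℝ) 1, (‖deriv f (x + u * (y - x))‖₊ : ℝ≥0∞) := h0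
      _ = ∫⁻ u in Set.Ioc (0:ℝ) 1, w1 u * w2 u := hsplit
      _ ≤ (∫⁻ u in Set.Ioc (0:ℝ) 1, w1 u ^ (2:ℝ)) ^ ((1:ℝ)/2)
          * (∫⁻ u in Set.Ioc (0:ℝ) 1, w2 u ^ (2:ℝ)) ^ ((1:ℝ)/2) := hhold2
      _ = (ENNReal.ofReal 2) ^ ((1:ℝ)/2) * (T y) ^ ((1:ℝ)/2) := by rw [hw1sq, hw2sq]
  have claim2 : ∀ y : ℝ, (‖J y‖₊ : ℝ≥0∞) ^ (2:ℝ) ≤ ENNReal.ofReal 2 * T y := by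
    intro y
    have := ENNReal.rpow_le_rpow (claim1 y) (by norm_num : (0:ℝ) ≤ 2)
    rw [ENNReal.mul_rpow_of_nonneg _ _ (by norm_num : (0:ℝ) ≤ 2),
      ← ENNReal.rpow_mul, ← ENNReal.rpow_mul] at this
    have h12 : (1/2 : ℝ) * 2 = 1 := by norm_num
    rwa [h12, ENNReal.rpow_one, ENNReal.rpow_one] at this
  
  have claim3 : ∫⁻ y : ℝ, T y ≤ ENNReal.ofReal 2 * N := by
    have hswap : ∫⁻ y : ℝ, T y
        = ∫⁻ u in Set.Ioc (0:ℝ) 1, ∫⁻ y : ℝ,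
            ENNReal.ofReal (u ^ ((1:ℝ)/2)) * (‖deriv f (x + u * (y - x))‖₊ : ℝ≥0∞) ^ (2:ℝ) := by
      rw [hT]
      apply lintegral_lintegral_swap
      apply Measurable.aemeasurable
      apply Measurable.mul
      · exact ENNReal.measurable_ofReal.comp ((measurable_id.pow_const _).comp measurable_snd)
      · exact (hFcont.measurable.enorm).pow_const _
    have hG : Measurable (fun t : ℝ => (‖deriv f t‖₊ : ℝ≥0∞) ^ (2:ℝ)) :=
      hcdf.measurable.enorm.pow_const _
    have hinner : ∀ u ∈ Set.Ioc (0:ℝ) 1,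
        (∫⁻ y : ℝ, ENNReal.ofReal (u ^ ((1:ℝ)/2))
          * (‖deriv f (x + u * (y - x))‖₊ : ℝ≥0∞) ^ (2:ℝ))
        = ENNReal.ofReal (u ^ (-(1/2) : ℝ)) * N := by
      intro u hu
      have hcont2 : Continuous (fun y : ℝ => deriv f (x + u * (y - x))) :=
        hcdf.comp (by fun_prop)
      have hm2 : Measurable (fun y : ℝ => (‖deriv f (x + u * (y - x))‖₊ : ℝ≥0∞) ^ (2:ℝ)) :=
        hcont2.measurable.enorm.pow_const _
      rw [lintegral_const_mul _ hm2]
      have hcv : (∫⁻ y : ℝ, (‖deriv f (x + u * (y - x))‖₊ : ℝ≥0∞) ^ (2:ℝ))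
          = (ENNReal.ofReal u)⁻¹ * N := by
        have haff := lintegral_comp_affine (fun t => (‖deriv f t‖₊ : ℝ≥0∞) ^ (2:ℝ))
          hG (x - u * x) hu.1
        rw [hN, ← haff]
        apply lintegral_congr
        intro y
        congr 2
        ring
      rw [hcv, ← mul_assoc]
      congr 1
      rw [← ENNReal.ofReal_inv_of_pos hu.1, ← ENNReal.ofReal_mul (Real.rpow_nonneg hu.1.le _)]
      congr 1
      rw [← Real.rpow_neg_one u, ← Real.rpow_add hu.1]
      norm_num
    have hmw : Measurable (fun v : ℝ => ENNReal.ofReal (v ^ (-(1/2) : ℝ))) :=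
      ENNReal.measurable_ofReal.comp (measurable_id.pow_const _)
    rw [hswap, setLIntegral_congr_fun measurableSet_Ioc hinner,
      lintegral_mul_const _ hmw, lintegral_rpow_Ioc]
  have claim4 : ∫⁻ y : ℝ, (‖J y‖₊ : ℝ≥0∞) ^ (2:ℝ) ≤ ENNReal.ofReal 2 * (ENNReal.ofReal 2 * N) :=
    calc ∫⁻ y : ℝ, (‖J y‖₊ : ℝ≥0∞) ^ (2:ℝ) ≤ ∫⁻ y : ℝ, ENNReal.ofReal 2 * T y :=
          lintegral_mono claim2
      _ = ENNReal.ofReal 2 * ∫⁻ y : ℝ, T y := lintegral_const_mul' _ _ ENNReal.ofReal_ne_top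
      _ ≤ ENNReal.ofReal 2 * (ENNReal.ofReal 2 * N) := mul_le_mul_right claim3 _
  have h4 : ENNReal.ofReal 2 * (ENNReal.ofReal 2 * N) = 4 * N := by
    rw [← mul_assoc]
    congr 1
    rw [← ENNReal.ofReal_mul (by norm_num)]
    norm_num
  have h5 : eLpNorm (deriv f) 2 volume = N ^ ((1:ℝ)/2) := by
    rw [eLpNorm_eq_lintegral_rpow_enorm_toReal two_ne_zero ENNReal.ofNat_ne_top, hN]
    norm_num
    rfl
  rw [h4] at claim4
  calc (∫⁻ y : ℝ, (‖J y‖₊ : ℝ≥0∞) ^ (2:ℝ)) ^ ((1:ℝ)/2) ≤ (4 * N) ^ ((1:ℝ)/2) :=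
        ENNReal.rpow_le_rpow claim4 (by norm_num)
    _ = (4:ℝ≥0∞) ^ ((1:ℝ)/2) * N ^ ((1:ℝ)/2) := ENNReal.mul_rpow_of_nonneg _ _ (by norm_num)
    _ = 2 * N ^ ((1:ℝ)/2) := by
        rw [show (4:ℝ≥0∞) = 2 ^ (2:ℕ) by norm_num, ← ENNReal.rpow_natCast, ← ENNReal.rpow_mul]
        norm_num
    _ = 2 * eLpNorm (deriv f) 2 volume := by rw [h5]

lemma schwartz_bdd (h : SchwartzMap ℝ ℂ) :
    ∃ B : ℝ, 0 ≤ B ∧ ∀ y, ‖h y‖ ≤ B := by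
  refine ⟨(SchwartzMap.seminorm ℝ 0 0) h, apply_nonneg _ _, fun y => ?_⟩
  have := SchwartzMap.le_seminorm ℝ 0 0 h y
  simpa [norm_iteratedFDeriv_zero] using this

lemma schwartz_deriv_cont (h : SchwartzMap ℝ ℂ) : Continuous (deriv (⇑h)) := by
  have : deriv (⇑h) = ⇑(SchwartzMap.derivCLM ℝ ℂ h) := by
    ext y; rw [SchwartzMap.derivCLM_apply]
  rw [this]
  exact (SchwartzMap.derivCLM ℝ ℂ h).continuous

lemma schwartz_lip (h : SchwartzMap ℝ ℂ) :
    ∃ M : ℝ, 0 ≤ M ∧ ∀ y z, ‖h y - h z‖ ≤ M * |y - z| := by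
  obtain ⟨M, hM0, hM⟩ := schwartz_bdd (SchwartzMap.derivCLM ℝ ℂ h)
  refine ⟨M, hM0, fun y z => ?_⟩
  have hle := Convex.norm_image_sub_le_of_norm_deriv_le (f := ⇑h) (s := Set.univ)
    (fun t _ => h.differentiable t)
    (fun t _ => by
      have := hM t
      rwa [SchwartzMap.derivCLM_apply] at this)
    convex_univ (Set.mem_univ z) (Set.mem_univ y)
  rwa [Real.norm_eq_abs] at hle

lemma lip_mul {f g : ℝ → ℂ} {Bf Mf Bg Mg : ℝ}
    (hBf : ∀ y, ‖f y‖ ≤ Bf) (hMf : ∀ y z, ‖f y - f z‖ ≤ Mf * |y - z|)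
    (hBg : ∀ y, ‖g y‖ ≤ Bg) (hMg : ∀ y z, ‖g y - g z‖ ≤ Mg * |y - z|) :
    ∀ y z, ‖f y * g y - f z * g z‖ ≤ (Bf * Mg + Mf * Bg) * |y - z| := by
  intro y z
  have hBf0 : 0 ≤ Bf := le_trans (norm_nonneg _) (hBf y)
  have hBg0 : 0 ≤ Bg := le_trans (norm_nonneg _) (hBg z)
  have key : f y * g y - f z * g z = f y * (g y - g z) + (f y - f z) * g z := by ring
  rw [key]
  calc ‖f y * (g y - g z) + (f y - f z) * g z‖
      ≤ ‖f y * (g y - g z)‖ + ‖(f y - f z) * g z‖ := norm_add_le _ _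
    _ = ‖f y‖ * ‖g y - g z‖ + ‖f y - f z‖ * ‖g z‖ := by rw [norm_mul, norm_mul]
    _ ≤ Bf * (Mg * |y - z|) + (Mf * |y - z|) * Bg := by
        apply add_le_add
        · exact mul_le_mul (hBf y) (hMg y z) (norm_nonneg _) hBf0
        · exact mul_le_mul (hMf y z) (hBg z) (norm_nonneg _)
            (le_trans (norm_nonneg _) (hMf y z))
    _ = (Bf * Mg + Mf * Bg) * |y - z| := by ring

/-- For smooth rapidly decaying `f, g`, `‖[f,H]g‖_{L∞} ≤ C ‖f'‖_{L²} ‖g‖_{L²}` with a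
universal constant `C`. -/
theorem commutator_hilbert_Linfty_bound :
    ∃ C : ℝ, 0 < C ∧ ∀ f g : SchwartzMap ℝ ℂ,
      eLpNorm (commHilbert (⇑f) (⇑g)) ⊤ (volume : Measure ℝ) ≤
        ENNReal.ofReal C * eLpNorm (deriv (⇑f)) 2 (volume : Measure ℝ) *
          eLpNorm (⇑g) 2 (volume : Measure ℝ) := by
  refine ⟨2, two_pos, fun f g => ?_⟩
  set c : ℂ := ((Real.pi : ℂ) * Complex.I)⁻¹ with hc
  obtain ⟨Bf, hBf0, hBf⟩ := schwartz_bdd f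
  obtain ⟨Mf, hMf0, hMf⟩ := schwartz_lip f
  obtain ⟨Bg, hBg0, hBg⟩ := schwartz_bdd g
  obtain ⟨Mg, hMg0, hMg⟩ := schwartz_lip g
  have hMfg := lip_mul hBf hMf hBg hMg
  have hMfg0 : 0 ≤ Bf * Mg + Mf * Bg := by positivity
  have hifg : Integrable (fun y => f y * g y) volume :=
    g.integrable.bdd_mul f.continuous.aestronglyMeasurable (Filter.Eventually.of_forall hBf)
  -- pointwise formula for the commutator
  have hcomm : ∀ x : ℝ, commHilbert (⇑f) (⇑g) x
      = c * ∫ y : ℝ, (f x - f y) * g y / ((x : ℂ) - (y : ℂ)) := by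
    intro x
    have hHg : hilbertT (⇑g) x = c * Lpv (⇑g) x :=
      Filter.Tendsto.limUnder_eq
        (((tendsto_trunc g.continuous g.integrable hMg0 hMg x)).const_mul c)
    have hHfg : hilbertT (fun y => f y * g y) x = c * Lpv (fun y => f y * g y) x :=
      Filter.Tendsto.limUnder_eq
        (((tendsto_trunc (f.continuous.mul g.continuous) hifg hMfg0 hMfg x)).const_mul c)
    rw [commHilbert, hHg, hHfg,
      ← comm_eq f.continuous g.continuous g.integrable hifg hMf0 hMf hBg hMg0 hMg hMfg0 hMfg x]
    ring
  -- pointwise norm bound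
  have hpt : ∀ x : ℝ, (‖commHilbert (⇑f) (⇑g) x‖₊ : ℝ≥0∞)
      ≤ 2 * eLpNorm (deriv (⇑f)) 2 volume * eLpNorm (⇑g) 2 volume := by
    intro x
    rw [hcomm x]
    have hc1 : (‖c‖₊ : ℝ≥0∞) ≤ 1 := by
      rw [← ENNReal.coe_one, ENNReal.coe_le_coe, ← NNReal.coe_le_coe, coe_nnnorm,
        NNReal.coe_one]
      rw [hc, norm_inv, norm_mul, Complex.norm_real, Complex.norm_I, mul_one,
        Real.norm_eq_abs, abs_of_pos Real.pi_pos]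
      have h1pi : (1:ℝ) ≤ Real.pi := by linarith [Real.pi_gt_three]
      exact inv_le_one_of_one_le₀ h1pi
    calc (‖c * ∫ y : ℝ, (f x - f y) * g y / ((x : ℂ) - (y : ℂ))‖₊ : ℝ≥0∞)
        = (‖c‖₊ : ℝ≥0∞) * ↑‖∫ y : ℝ, (f x - f y) * g y / ((x : ℂ) - (y : ℂ))‖₊ := by
          rw [nnnorm_mul, ENNReal.coe_mul]
      _ ≤ 1 * ∫⁻ y : ℝ, (‖(f x - f y) * g y / ((x : ℂ) - (y : ℂ))‖₊ : ℝ≥0∞) :=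
          mul_le_mul' hc1 (enorm_integral_le_lintegral_enorm _)
      _ = ∫⁻ y : ℝ, (‖(f x - f y) * g y / ((x : ℂ) - (y : ℂ))‖₊ : ℝ≥0∞) := one_mul _
      _ ≤ 2 * eLpNorm (deriv (⇑f)) 2 volume * eLpNorm (⇑g) 2 volume :=
          lintegral_bound f.differentiable (schwartz_deriv_cont f)
            g.continuous.measurable.aemeasurable x
  rw [eLpNorm_exponent_top, eLpNormEssSup, ENNReal.ofReal_ofNat]
  exact essSup_le_of_ae_le _ (Filter.Eventually.of_forall hpt)
end

section
/- For f, g ∈ C¹(ℝ) with the relevant norms finite, ‖fg‖_{Ḣ^{1/2}} ≤ C(‖f‖_{L∞} ‖g‖_{Ḣ^{1/2}} + ‖g‖_{L∞} ‖f‖_{Ḣ^{1/2}}) for a universal constant C. -/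
open MeasureTheory
open scoped ENNReal

/-- The squared homogeneous `Ḣ^{1/2}` seminorm. -/
noncomputable def hHalfSq (f : ℝ → ℂ) : ℝ≥0∞ :=
  ENNReal.ofReal (1 / (2 * Real.pi)) *
    ∫⁻ x : ℝ, ∫⁻ y : ℝ, ENNReal.ofReal (‖f x - f y‖ ^ 2 / (x - y) ^ 2)

/-- The homogeneous `Ḣ^{1/2}` seminorm. -/
noncomputable def hHalf (f : ℝ → ℂ) : ℝ≥0∞ := hHalfSq f ^ (1 / 2 : ℝ)

lemma hHalf_ptwise (f g : ℝ → ℂ) (x y : ℝ) (A B : ℝ≥0∞)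
    (hx : (‖f x‖₊ : ℝ≥0∞) ≤ A) (hy : (‖g y‖₊ : ℝ≥0∞) ≤ B) :
    ENNReal.ofReal (‖f x * g x - f y * g y‖ ^ 2 / (x - y) ^ 2) ≤
      2 * (A ^ 2 * ENNReal.ofReal (‖g x - g y‖ ^ 2 / (x - y) ^ 2) +
        B ^ 2 * ENNReal.ofReal (‖f x - f y‖ ^ 2 / (x - y) ^ 2)) := by
  rcases eq_or_ne (x - y) 0 with hd | hd
  · simp [hd]
  have hd2 : (0:ℝ) < (x - y) ^ 2 := by positivity
  have hreal : ‖f x * g x - f y * g y‖ ^ 2 ≤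
      2 * ‖f x‖ ^ 2 * ‖g x - g y‖ ^ 2 + 2 * ‖g y‖ ^ 2 * ‖f x - f y‖ ^ 2 := by
    have h1 : ‖f x * g x - f y * g y‖ ≤ ‖f x‖ * ‖g x - g y‖ + ‖f x - f y‖ * ‖g y‖ := by
      calc ‖f x * g x - f y * g y‖ = ‖f x * (g x - g y) + (f x - f y) * g y‖ := by ring_nf
        _ ≤ ‖f x * (g x - g y)‖ + ‖(f x - f y) * g y‖ := norm_add_le _ _
        _ = ‖f x‖ * ‖g x - g y‖ + ‖f x - f y‖ * ‖g y‖ := by rw [norm_mul, norm_mul]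
    nlinarith [norm_nonneg (f x * g x - f y * g y), norm_nonneg (f x), norm_nonneg (g y),
      norm_nonneg (g x - g y), norm_nonneg (f x - f y),
      sq_nonneg (‖f x‖ * ‖g x - g y‖ - ‖f x - f y‖ * ‖g y‖)]
  calc ENNReal.ofReal (‖f x * g x - f y * g y‖ ^ 2 / (x - y) ^ 2)
      ≤ ENNReal.ofReal ((2 * ‖f x‖ ^ 2 * ‖g x - g y‖ ^ 2 +
          2 * ‖g y‖ ^ 2 * ‖f x - f y‖ ^ 2) / (x - y) ^ 2) := by
        apply ENNReal.ofReal_le_ofReal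
        exact div_le_div_of_nonneg_right hreal hd2.le
    _ = ENNReal.ofReal (2 * ‖f x‖ ^ 2 * (‖g x - g y‖ ^ 2 / (x - y) ^ 2) +
          2 * ‖g y‖ ^ 2 * (‖f x - f y‖ ^ 2 / (x - y) ^ 2)) := by ring_nf
    _ = 2 * ((‖f x‖₊ : ℝ≥0∞) ^ 2 * ENNReal.ofReal (‖g x - g y‖ ^ 2 / (x - y) ^ 2)) +
          2 * ((‖g y‖₊ : ℝ≥0∞) ^ 2 * ENNReal.ofReal (‖f x - f y‖ ^ 2 / (x - y) ^ 2)) := by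
        rw [ENNReal.ofReal_add (by positivity) (by positivity)]
        rw [mul_assoc, mul_assoc, ENNReal.ofReal_mul (by norm_num),
          ENNReal.ofReal_mul (by norm_num), ENNReal.ofReal_mul (by positivity),
          ENNReal.ofReal_mul (by positivity), ENNReal.ofReal_ofNat,
          ENNReal.ofReal_pow (norm_nonneg _), ENNReal.ofReal_pow (norm_nonneg _),
          ofReal_norm, ofReal_norm, enorm_eq_nnnorm, enorm_eq_nnnorm]
        try ring
    _ ≤ 2 * (A ^ 2 * ENNReal.ofReal (‖g x - g y‖ ^ 2 / (x - y) ^ 2) +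
          B ^ 2 * ENNReal.ofReal (‖f x - f y‖ ^ 2 / (x - y) ^ 2)) := by
        rw [mul_add]
        gcongr

lemma hHalf_meas1 (f : ℝ → ℂ) (hf : Continuous f) (x : ℝ) :
    Measurable fun y : ℝ => ENNReal.ofReal (‖f x - f y‖ ^ 2 / (x - y) ^ 2) := by
  apply Measurable.ennreal_ofReal
  exact (((continuous_const.sub hf).norm.pow 2).measurable).div
    (((continuous_const.sub continuous_id).pow 2).measurable)

lemma hHalf_meas (f : ℝ → ℂ) (hf : Continuous f) :
    Measurable (fun p : ℝ × ℝ => ENNReal.ofReal (‖f p.1 - f p.2‖ ^ 2 / (p.1 - p.2) ^ 2)) := by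
  apply Measurable.ennreal_ofReal
  apply Measurable.div
  · exact (((hf.comp continuous_fst).sub (hf.comp continuous_snd)).norm.pow 2).measurable
  · exact (continuous_fst.sub continuous_snd).pow 2 |>.measurable

/-- For bounded `C¹` functions `f, g` with finite `Ḣ^{1/2}` seminorms,
`‖fg‖_{Ḣ^{1/2}} ≤ C (‖f‖_{L∞} ‖g‖_{Ḣ^{1/2}} + ‖g‖_{L∞} ‖f‖_{Ḣ^{1/2}})` for a universal `C`. -/
theorem hHalf_product_bound :
    ∃ C : ℝ, 0 < C ∧ ∀ f g : ℝ → ℂ, ContDiff ℝ 1 f → ContDiff ℝ 1 g →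
      MemLp f ⊤ (volume : Measure ℝ) → MemLp g ⊤ (volume : Measure ℝ) →
      hHalf f < ⊤ → hHalf g < ⊤ →
      hHalf (fun x => f x * g x) ≤
        ENNReal.ofReal C * (eLpNorm f ⊤ (volume : Measure ℝ) * hHalf g +
          eLpNorm g ⊤ (volume : Measure ℝ) * hHalf f) := by
  refine ⟨2, by norm_num, fun f g hf hg hfb hgb _ _ => ?_⟩
  set A := eLpNorm f ⊤ (volume : Measure ℝ) with hA
  set B := eLpNorm g ⊤ (volume : Measure ℝ) with hB
  have hAtop : A ≠ ⊤ := hfb.2.ne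
  have hBtop : B ≠ ⊤ := hgb.2.ne
  have hfc : Continuous f := hf.continuous
  have hgc : Continuous g := hg.continuous
  have hGm := hHalf_meas g hgc
  have hFm := hHalf_meas f hfc
  have hf_ae : ∀ᵐ x : ℝ, (‖f x‖₊ : ℝ≥0∞) ≤ A := by
    rw [hA, eLpNorm_exponent_top]
    exact enorm_ae_le_eLpNormEssSup f volume
  have hg_ae : ∀ᵐ y : ℝ, (‖g y‖₊ : ℝ≥0∞) ≤ B := by
    rw [hB, eLpNorm_exponent_top]
    exact enorm_ae_le_eLpNormEssSup g volume
  -- the key integral bound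
  set SG := ∫⁻ x : ℝ, ∫⁻ y : ℝ, ENNReal.ofReal (‖g x - g y‖ ^ 2 / (x - y) ^ 2) with hSG
  set SF := ∫⁻ x : ℝ, ∫⁻ y : ℝ, ENNReal.ofReal (‖f x - f y‖ ^ 2 / (x - y) ^ 2) with hSF
  have key : (∫⁻ x : ℝ, ∫⁻ y : ℝ,
      ENNReal.ofReal (‖f x * g x - f y * g y‖ ^ 2 / (x - y) ^ 2)) ≤
      2 * (A ^ 2 * SG + B ^ 2 * SF) := by
    have step1 : (∫⁻ x : ℝ, ∫⁻ y : ℝ,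
        ENNReal.ofReal (‖f x * g x - f y * g y‖ ^ 2 / (x - y) ^ 2)) ≤
        ∫⁻ x : ℝ, 2 * (A ^ 2 * (∫⁻ y : ℝ, ENNReal.ofReal (‖g x - g y‖ ^ 2 / (x - y) ^ 2)) +
          B ^ 2 * (∫⁻ y : ℝ, ENNReal.ofReal (‖f x - f y‖ ^ 2 / (x - y) ^ 2))) := by
      apply lintegral_mono_ae
      filter_upwards [hf_ae] with x hx
      calc (∫⁻ y : ℝ, ENNReal.ofReal (‖f x * g x - f y * g y‖ ^ 2 / (x - y) ^ 2))
          ≤ ∫⁻ y : ℝ, 2 * (A ^ 2 * ENNReal.ofReal (‖g x - g y‖ ^ 2 / (x - y) ^ 2) +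
              B ^ 2 * ENNReal.ofReal (‖f x - f y‖ ^ 2 / (x - y) ^ 2)) := by
            apply lintegral_mono_ae
            filter_upwards [hg_ae] with y hy
            exact hHalf_ptwise f g x y A B hx hy
        _ = 2 * (A ^ 2 * (∫⁻ y : ℝ, ENNReal.ofReal (‖g x - g y‖ ^ 2 / (x - y) ^ 2)) +
              B ^ 2 * (∫⁻ y : ℝ, ENNReal.ofReal (‖f x - f y‖ ^ 2 / (x - y) ^ 2))) := by
            rw [lintegral_const_mul' 2 _ (by norm_num),
              lintegral_add_left ((hHalf_meas1 g hgc x).const_mul _),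
              lintegral_const_mul' _ _ (ENNReal.pow_ne_top hAtop),
              lintegral_const_mul' _ _ (ENNReal.pow_ne_top hBtop)]
    refine step1.trans ?_
    rw [lintegral_const_mul' 2 _ (by norm_num),
      lintegral_add_left ((hGm.lintegral_prod_right').const_mul _),
      lintegral_const_mul' _ _ (ENNReal.pow_ne_top hAtop),
      lintegral_const_mul' _ _ (ENNReal.pow_ne_top hBtop)]
  -- from squares to the seminorms
  have keySq : hHalfSq (fun x => f x * g x) ≤ 2 * (A ^ 2 * hHalfSq g + B ^ 2 * hHalfSq f) := by
    unfold hHalfSq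
    calc ENNReal.ofReal (1 / (2 * Real.pi)) *
        (∫⁻ x : ℝ, ∫⁻ y : ℝ, ENNReal.ofReal (‖f x * g x - f y * g y‖ ^ 2 / (x - y) ^ 2))
        ≤ ENNReal.ofReal (1 / (2 * Real.pi)) * (2 * (A ^ 2 * SG + B ^ 2 * SF)) := by
          gcongr
      _ = 2 * (A ^ 2 * (ENNReal.ofReal (1 / (2 * Real.pi)) * SG) +
            B ^ 2 * (ENNReal.ofReal (1 / (2 * Real.pi)) * SF)) := by ring
  -- take square roots
  have h12 : (0:ℝ) ≤ 1 / 2 := by norm_num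
  calc hHalf (fun x => f x * g x)
      ≤ (2 * (A ^ 2 * hHalfSq g + B ^ 2 * hHalfSq f)) ^ (1 / 2 : ℝ) := by
        unfold hHalf
        exact ENNReal.rpow_le_rpow keySq h12
    _ = (2:ℝ≥0∞) ^ (1 / 2 : ℝ) * (A ^ 2 * hHalfSq g + B ^ 2 * hHalfSq f) ^ (1 / 2 : ℝ) :=
        ENNReal.mul_rpow_of_nonneg _ _ h12
    _ ≤ (2:ℝ≥0∞) ^ (1 / 2 : ℝ) *
          ((A ^ 2 * hHalfSq g) ^ (1 / 2 : ℝ) + (B ^ 2 * hHalfSq f) ^ (1 / 2 : ℝ)) := by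
        gcongr
        exact ENNReal.rpow_add_le_add_rpow _ _ h12 (by norm_num)
    _ = (2:ℝ≥0∞) ^ (1 / 2 : ℝ) * (A * hHalf g + B * hHalf f) := by
        rw [ENNReal.mul_rpow_of_nonneg _ _ h12, ENNReal.mul_rpow_of_nonneg _ _ h12]
        have hA2 : (A ^ 2 : ℝ≥0∞) ^ (1 / 2 : ℝ) = A := by
          rw [← ENNReal.rpow_natCast A 2, ← ENNReal.rpow_mul]
          norm_num
        have hB2 : (B ^ 2 : ℝ≥0∞) ^ (1 / 2 : ℝ) = B := by
          rw [← ENNReal.rpow_natCast B 2, ← ENNReal.rpow_mul]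
          norm_num
        rw [hA2, hB2]
        rfl
    _ ≤ ENNReal.ofReal 2 * (A * hHalf g + B * hHalf f) := by
        gcongr
        calc (2:ℝ≥0∞) ^ (1 / 2 : ℝ) ≤ (2:ℝ≥0∞) ^ (1 : ℝ) := by
              apply ENNReal.rpow_le_rpow_of_exponent_le (by norm_num) (by norm_num)
          _ = ENNReal.ofReal 2 := by rw [ENNReal.rpow_one, ENNReal.ofReal_ofNat]
end
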